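/- Let G = (V,E) be a graph with n vertices and let C ⊆ V be a vertex cover of G. Define w ∈ ℝ^{n+1} by w[i] = 3 if v_i ∈ C, w[i] = -1 if v_i ∉ C (for i ≤ n), w[n+1] = -1, and b = 0. Then: (a) sign(wᵀ x_t + b) = -1 for the test point x_t = e_{n+1}; (b) sign(wᵀ x_{i,j} + b) = +1 for every edge point x_{i,j}; (c) sign(wᵀ e_i + b) = +1 iff v_i ∈ C. Hence flipping exactly the labels of the vertex points corresponding to C yields a poisoned dataset perfectly realized by this linear classifier that also classifies x_t as -1. -/

import Mathlib

open Finset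

noncomputable def sgn (t : ℝ) : ℝ := if 0 ≤ t then 1 else -1

noncomputable def classify {d : ℕ} (w : Fin d → ℝ) (b : ℝ) (x : Fin d → ℝ) : ℝ :=
  sgn (∑ k, w k * x k + b)

open Classical in
noncomputable def flips {ι : Type*} [Fintype ι] (y y' : ι → ℝ) : ℕ :=
  (Finset.univ.filter fun i => y' i ≠ y i).card

noncomputable def robustness {d : ℕ} {ι : Type*} [Fintype ι]
    (x : ι → Fin d → ℝ) (y : ι → ℝ) (xt : Fin d → ℝ) (yt : ℝ) : ℕ :=
  sInf {k | ∃ y' : ι → ℝ, (∀ i, y' i = y i ∨ y' i = - y i) ∧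
    (∃ w b, (∀ i, classify w b (x i) = y' i) ∧ classify w b xt = yt) ∧
    flips y y' = k}

def vert {n : ℕ} (i : Fin n) : Fin (n+1) → ℝ := fun k => if k = i.castSucc then 1 else 0

def testPt (n : ℕ) : Fin (n+1) → ℝ := fun k => if k = Fin.last n then 1 else 0

def edgePt {n : ℕ} (i j : Fin n) : Fin (n+1) → ℝ :=
  fun k => if k = i.castSucc ∨ k = j.castSucc ∨ k = Fin.last n then 1 else 0

open Classical in
noncomputable def edgeVec {n : ℕ} (e : Sym2 (Fin n)) : Fin (n+1) → ℝ :=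
  fun k => if k = Fin.last n then 1 else if ∃ i : Fin n, i ∈ e ∧ k = i.castSucc then 1 else 0

theorem stmt1 {n : ℕ} (G : SimpleGraph (Fin n)) (C : Finset (Fin n))
    (hC : ∀ ⦃i j : Fin n⦄, G.Adj i j → i ∈ C ∨ j ∈ C) :
    let w : Fin (n+1) → ℝ := fun k =>
      if h : k = Fin.last n then -1 else if k.castPred h ∈ C then 3 else -1
    (classify w 0 (testPt n) = -1) ∧
    (∀ i j : Fin n, G.Adj i j → classify w 0 (edgePt i j) = 1) ∧
    (∀ i : Fin n, classify w 0 (vert i) = 1 ↔ i ∈ C) := by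
  intro w
  have hwlast : w (Fin.last n) = -1 := by simp [w]
  have hwcs : ∀ i : Fin n, w i.castSucc = if i ∈ C then 3 else -1 := by
    intro i
    simp [w, (Fin.castSucc_lt_last i).ne, Fin.castPred_castSucc]
    by_cases h : i ∈ C <;> simp [h]
  refine ⟨?_, ?_, ?_⟩
  · unfold classify testPt
    have : (∑ k, w k * (if k = Fin.last n then (1:ℝ) else 0)) = w (Fin.last n) := by
      simp [mul_ite]
    rw [this, hwlast]
    norm_num [sgn]
  · intro i j hij
    have hij' : i ≠ j := G.ne_of_adj hij
    have h1 : i.castSucc ≠ j.castSucc := by simpa [Fin.castSucc_inj] using hij'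
    have h2 : i.castSucc ≠ Fin.last n := (Fin.castSucc_lt_last i).ne
    have h3 : j.castSucc ≠ Fin.last n := (Fin.castSucc_lt_last j).ne
    unfold classify edgePt
    have hsum : (∑ k, w k * (if k = i.castSucc ∨ k = j.castSucc ∨ k = Fin.last n
        then (1:ℝ) else 0)) = w i.castSucc + w j.castSucc + w (Fin.last n) := by
      have : (Finset.univ.filter fun k =>
          k = i.castSucc ∨ k = j.castSucc ∨ k = Fin.last n) =
          {i.castSucc, j.castSucc, Fin.last n} := by
        ext k; simp [Finset.mem_insert]
      rw [Finset.sum_congr rfl (fun k _ => by rw [mul_ite, mul_one, mul_zero]),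
        ← Finset.sum_filter, this]
      rw [Finset.sum_insert (by simp [h1, h2]), Finset.sum_insert (by simp [h3]),
        Finset.sum_singleton, add_assoc]
    rw [hsum, hwlast, hwcs, hwcs]
    have hpos : (0:ℝ) ≤ (if i ∈ C then (3:ℝ) else -1) + (if j ∈ C then (3:ℝ) else -1) + -1 + 0 := by
      rcases hC hij with h | h <;> split_ifs <;> norm_num
    unfold sgn
    rw [if_pos hpos]
  · intro i
    unfold classify vert
    have : (∑ k, w k * (if k = i.castSucc then (1:ℝ) else 0)) = w i.castSucc := by
      simp [mul_ite]
    rw [this, hwcs]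
    by_cases h : i ∈ C <;> simp [sgn, h] <;> norm_num
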